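/- Suppose sequences (L_n, R_n) → (L, R) and (L_n Diag(z̄_n), R_n Diag(z_n⁻¹)) → (L', R') in (ℂ^{p×r})², where all pairs are bi-orthogonal (L*R = I_r etc.) and z_n ∈ (ℂ*)^r. Then the sequence (z_n) is bounded and bounded away from zero, and hence admits a convergent subsequence in (ℂ*)^r. -/

import Mathlib

open Matrix Filter

/-- Key step in properness of the `(ℂ*)^r` action: if `(Lₙ,Rₙ) → (L,R)` and
`(Lₙ Diag(z̄ₙ), Rₙ Diag(zₙ⁻¹)) → (L',R')`, all pairs bi-orthogonal and `zₙ` with nonzero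
entries, then `(zₙ)` is (entrywise) bounded and bounded away from zero, and admits a
subsequence converging in `(ℂ*)^r`. -/
theorem scaling_action_proper_step (p r : ℕ) (hr : 0 < r) (hrp : r < p)
    (Ln Rn : ℕ → Matrix (Fin p) (Fin r) ℂ) (L R L' R' : Matrix (Fin p) (Fin r) ℂ)
    (z : ℕ → Fin r → ℂ) (hz : ∀ n i, z n i ≠ 0)
    (hbio : ∀ n, (Ln n)ᴴ * (Rn n) = 1) (hbioL : Lᴴ * R = 1) (hbioL' : L'ᴴ * R' = 1)
    (hconv : Tendsto (fun n => (Ln n, Rn n)) atTop (nhds (L, R)))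
    (hconv' : Tendsto
      (fun n => (Ln n * Matrix.diagonal (fun i => star (z n i)),
                 Rn n * Matrix.diagonal (fun i => (z n i)⁻¹))) atTop (nhds (L', R'))) :
    (∃ c C : ℝ, 0 < c ∧ ∀ n i, c ≤ ‖z n i‖ ∧ ‖z n i‖ ≤ C)
    ∧ ∃ (φ : ℕ → ℕ) (w : Fin r → ℂ), StrictMono φ ∧ (∀ i, w i ≠ 0) ∧
        Tendsto (fun n => z (φ n)) atTop (nhds w) := by
  classical
  haveI : Nonempty (Fin r) := ⟨⟨0, hr⟩⟩
  have hLn : Tendsto Ln atTop (nhds L) := (continuous_fst.tendsto (L, R)).comp hconv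
  have hRn : Tendsto Rn atTop (nhds R) := (continuous_snd.tendsto (L, R)).comp hconv
  have hLn' : Tendsto (fun n => Ln n * Matrix.diagonal (fun i => star (z n i))) atTop
      (nhds L') := (continuous_fst.tendsto (L', R')).comp hconv'
  have hRn' : Tendsto (fun n => Rn n * Matrix.diagonal (fun i => (z n i)⁻¹)) atTop
      (nhds R') := (continuous_snd.tendsto (L', R')).comp hconv'
  have hcontmul : Continuous (fun pq : Matrix (Fin p) (Fin r) ℂ × Matrix (Fin p) (Fin r) ℂ =>
      pq.1ᴴ * pq.2) := (continuous_fst.matrix_conjTranspose).matrix_mul continuous_snd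
  -- (Lₙ Diag(z̄ₙ))ᴴ Rₙ = Diag(zₙ)
  have heq1 : ∀ n, (Ln n * Matrix.diagonal (fun i => star (z n i)))ᴴ * Rn n
      = Matrix.diagonal (z n) := by
    intro n
    rw [conjTranspose_mul, diagonal_conjTranspose, Matrix.mul_assoc, hbio n, Matrix.mul_one]
    have : (star fun i => star (z n i)) = z n := by funext i; simp
    rw [this]
  -- Lₙᴴ (Rₙ Diag(zₙ⁻¹)) = Diag(zₙ⁻¹)
  have heq2 : ∀ n, (Ln n)ᴴ * (Rn n * Matrix.diagonal (fun i => (z n i)⁻¹))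
      = Matrix.diagonal (fun i => (z n i)⁻¹) := by
    intro n
    rw [← Matrix.mul_assoc, hbio n, Matrix.one_mul]
  have key1 : Tendsto (fun n => Matrix.diagonal (z n)) atTop (nhds (L'ᴴ * R)) := by
    have h := (hcontmul.tendsto (L', R)).comp (hLn'.prodMk_nhds hRn)
    simpa only [Function.comp_def, heq1] using h
  have key2 : Tendsto (fun n => Matrix.diagonal (fun i => (z n i)⁻¹)) atTop
      (nhds (Lᴴ * R')) := by
    have h := (hcontmul.tendsto (L, R')).comp (hLn.prodMk_nhds hRn')
    simpa only [Function.comp_def, heq2] using h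
  set w : Fin r → ℂ := fun i => (L'ᴴ * R) i i with hw
  set v : Fin r → ℂ := fun i => (Lᴴ * R') i i with hv
  have hzt : ∀ i, Tendsto (fun n => z n i) atTop (nhds (w i)) := by
    intro i
    have h := ((continuous_id.matrix_elem i i).tendsto (L'ᴴ * R)).comp key1
    simpa [Function.comp_def, Matrix.diagonal_apply_eq] using h
  have hzti : ∀ i, Tendsto (fun n => (z n i)⁻¹) atTop (nhds (v i)) := by
    intro i
    have h := ((continuous_id.matrix_elem i i).tendsto (Lᴴ * R')).comp key2
    simpa [Function.comp_def, Matrix.diagonal_apply_eq] using h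
  have hwv : ∀ i, w i * v i = 1 := by
    intro i
    have h1 : Tendsto (fun n => z n i * (z n i)⁻¹) atTop (nhds (w i * v i)) :=
      (hzt i).mul (hzti i)
    have h2 : Tendsto (fun n => z n i * (z n i)⁻¹) atTop (nhds 1) := by
      have : (fun n => z n i * (z n i)⁻¹) = fun _ => (1 : ℂ) := by
        funext n; exact mul_inv_cancel₀ (hz n i)
      rw [this]; exact tendsto_const_nhds
    exact tendsto_nhds_unique h1 h2
  have hw0 : ∀ i, w i ≠ 0 := fun i => left_ne_zero_of_mul_eq_one (hwv i)
  -- per-coordinate bounds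
  have hbound : ∀ i, ∃ ci Ci : ℝ, 0 < ci ∧
      ∀ n, ci ≤ ‖z n i‖ ∧ ‖z n i‖ ≤ Ci := by
    intro i
    have habs : Tendsto (fun n => ‖z n i‖) atTop (nhds ‖w i‖) :=
      (continuous_norm.tendsto (w i)).comp (hzt i)
    have habsinv : Tendsto (fun n => ‖(z n i)⁻¹‖) atTop
        (nhds ‖v i‖) := (continuous_norm.tendsto (v i)).comp (hzti i)
    obtain ⟨C, hC⟩ := habs.bddAbove_range
    obtain ⟨M, hM⟩ := habsinv.bddAbove_range
    refine ⟨(max M 1)⁻¹, C, by positivity, fun n => ⟨?_, hC ⟨n, rfl⟩⟩⟩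
    have h1 : ‖(z n i)⁻¹‖ ≤ max M 1 :=
      le_trans (hM ⟨n, rfl⟩) (le_max_left _ _)
    have h2 : (0 : ℝ) < ‖z n i‖ := by
      simpa [norm_pos_iff] using hz n i
    rw [norm_inv] at h1
    calc (max M 1)⁻¹ ≤ (‖z n i‖⁻¹)⁻¹ := by
          apply inv_anti₀ (by positivity) h1
      _ = ‖z n i‖ := inv_inv _
  choose cf Cf hcf hbd using hbound
  refine ⟨⟨Finset.univ.inf' Finset.univ_nonempty cf, Finset.univ.sup' Finset.univ_nonempty Cf,
    ?_, fun n i => ⟨?_, ?_⟩⟩, id, w, strictMono_id, hw0, tendsto_pi_nhds.mpr hzt⟩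
  · exact (Finset.lt_inf'_iff _).mpr fun i _ => hcf i
  · exact le_trans (Finset.inf'_le _ (Finset.mem_univ i)) (hbd i n).1
  · exact le_trans (hbd i n).2 (Finset.le_sup' _ (Finset.mem_univ i))
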